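/- Let q be an odd prime power and b ∈ F_{q^2}^* with 1 - 4 b^{-(q+1)} a nonzero square of F_q. Then the polynomial x^{2(q-1)} + b x^{q-1} + b^{1-q} has no root in F_{q^2}^*; equivalently, f(x) = b^{1-q} x + b x^q + x^{2q-1} has only the root x = 0 in F_{q^2}. -/

import Mathlib

/-- For odd prime power `q` and `b ∈ F_{q²}*` such that `1 - 4 b^(-(q+1))` is a
nonzero square of `F_q`, the polynomial `x^(2(q-1)) + b x^(q-1) + b^(1-q)` has no
root in `F_{q²}*`. -/
theorem stmt_12 (p n q : ℕ) (hp : p.Prime) (hn : 0 < n) (hq : q = p ^ n)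
    (hodd : Odd q)
    (F : Type*) [Field F] [Fintype F] (hcard : Fintype.card F = q ^ 2)
    (b : F) (hb : b ≠ 0)
    (hsq : ∃ c : F, c ≠ 0 ∧ c ^ q = c ∧ c ^ 2 = 1 - 4 * (b ^ (q + 1))⁻¹) :
    ∀ x : F, x ≠ 0 → x ^ (2 * (q - 1)) + b * x ^ (q - 1) + b * (b ^ q)⁻¹ ≠ 0 := by
  intro x hx hroot
  obtain ⟨c, hc0, hcq, hc2⟩ := hsq
  haveI : Fact p.Prime := ⟨hp⟩
  -- characteristic of F is p
  haveI hchar : CharP F p := by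
    have h1 : CharP F (ringChar F) := ringChar.charP F
    obtain ⟨m, hprime, hcardF⟩ := FiniteField.card F (ringChar F)
    have hdvd : ringChar F ∣ p ^ (2 * n) := by
      have : p ^ (2 * n) = ringChar F ^ (m : ℕ) := by
        rw [← hcardF, hcard, hq, ← pow_mul, mul_comm]
      rw [this]
      exact dvd_pow_self _ (by positivity)
    have := (Nat.prime_dvd_prime_iff_eq hprime hp).mp
      (hprime.dvd_of_dvd_pow hdvd)
    rwa [this] at h1
  -- p ≠ 2 since q is odd
  have hp2 : p ≠ 2 := by
    rintro rfl
    have : Even q := by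
      rw [hq]
      exact (Nat.even_pow.mpr ⟨even_iff_two_dvd.mpr dvd_rfl, hn.ne'⟩)
    exact (Nat.not_even_iff_odd.mpr hodd) this
  have h2 : (2 : F) ≠ 0 := Ring.two_ne_zero (by rw [ringChar.eq F p]; exact hp2)
  have h8 : (8 : F) ≠ 0 := by
    have := pow_ne_zero 3 h2
    norm_num at this
    exact this
  -- Frobenius
  have hfrob : ∀ u v : F, (u + v) ^ q = u ^ q + v ^ q := by
    intro u v
    rw [hq]
    exact add_pow_char_pow ..
  have h2q : (2 : F) ^ q = 2 := by
    rw [show (2 : F) = 1 + 1 by norm_num, hfrob, one_pow]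
  have hq1 : 1 ≤ q := by rw [hq]; exact Nat.one_le_pow _ _ hp.pos
  obtain ⟨y, hy_def⟩ : ∃ y : F, y = x ^ (q - 1) := ⟨_, rfl⟩
  have hy0 : y ≠ 0 := by rw [hy_def]; exact pow_ne_zero _ hx
  -- y^(q+1) = 1
  have hyq1 : y ^ (q + 1) = 1 := by
    have hx1 : x ^ (q ^ 2 - 1) = 1 := by
      have := FiniteField.pow_card_sub_one_eq_one x hx
      rwa [hcard] at this
    rw [hy_def, ← pow_mul]
    have : (q - 1) * (q + 1) = q ^ 2 - 1 := by
      have hq2 : 1 ≤ q ^ 2 := Nat.one_le_pow _ _ (by omega)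
      zify [hq1, hq2]
      ring
    rw [this, hx1]
  -- the quadratic equation for y
  have h1 : y ^ 2 + b * y + b * (b ^ q)⁻¹ = 0 := by
    rw [hy_def, ← pow_mul, mul_comm (q - 1) 2]
    exact hroot
  have hbq : (b : F) ^ q ≠ 0 := pow_ne_zero _ hb
  have hbq1 : (b : F) ^ (q + 1) ≠ 0 := pow_ne_zero _ hb
  have hinv : b ^ q * (b ^ q)⁻¹ = 1 := mul_inv_cancel₀ hbq
  -- b^(q+1) * (1 - c^2) = 4
  have hB : b ^ (q + 1) * (1 - c ^ 2) = 4 := by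
    rw [hc2]
    field_simp
    ring
  have hB' : b ^ q * b * (1 - c ^ 2) = 4 := by rw [← pow_succ]; exact hB
  -- inverse-free form of the quadratic
  have h1' : y ^ 2 * b ^ q + b * y * b ^ q + b = 0 := by
    linear_combination b ^ q * h1 - b * hinv
  -- (2y+b)^2 = (bc)^2
  have hd : (2 * y + b - b * c) * (2 * y + b + b * c) = 0 := by
    have hG : b ^ q * ((2 * y + b - b * c) * (2 * y + b + b * c)) = 0 := by
      linear_combination 4 * h1' + b * hB'
    exact (mul_eq_zero.mp hG).resolve_left hbq
  have hB2 : b ^ (q + 1) * (1 - c) * (1 + c) = 4 := by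
    linear_combination hB
  have hc8 : (8 : F) * c = 0 := by
    rcases mul_eq_zero.mp hd with hcase | hcase
    · -- 2y = b*(c-1)
      have h2y : 2 * y = b * (c - 1) := by linear_combination hcase
      have hA : b ^ (q + 1) * (c - 1) ^ 2 = 4 := by
        have hpow : (2 * y) ^ (q + 1) = (b * (c - 1)) ^ (q + 1) := by rw [h2y]
        have hcmq : (c - 1) ^ q = c - 1 := by
          have := hfrob c (-1)
          rw [hcq, Odd.neg_one_pow hodd] at this
          simpa [sub_eq_add_neg] using this
        rw [mul_pow, mul_pow, hyq1, mul_one, pow_succ (2 : F), h2q,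
          pow_succ (c - 1), hcmq] at hpow
        linear_combination -hpow
      linear_combination (-(1 + c)) * hA + (1 - c) * hB2
    · -- 2y = -(b*(1+c))
      have h2y : 2 * y = -(b * (1 + c)) := by linear_combination hcase
      have hA : b ^ (q + 1) * (1 + c) ^ 2 = 4 := by
        have hpow : (2 * y) ^ (q + 1) = (-(b * (1 + c))) ^ (q + 1) := by rw [h2y]
        have heven : Even (q + 1) := Odd.add_one hodd
        have hcmq : (1 + c) ^ q = 1 + c := by
          have := hfrob 1 c
          rwa [hcq, one_pow] at this
        rw [Even.neg_pow heven, mul_pow, mul_pow, hyq1, mul_one, pow_succ (2 : F),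
          h2q, pow_succ (1 + c), hcmq] at hpow
        linear_combination -hpow
      linear_combination (1 - c) * hA + (-(1 + c)) * hB2
  exact hc0 ((mul_eq_zero.mp hc8).resolve_left h8)
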